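/- The following are equivalent: (i) for every ξ ∈ X* with ‖ξ‖ < γ, x̄ is the unique global minimizer of y ↦ f(y) − ⟨ξ, y⟩; (ii) f(x) ≥ f(x̄) + γ‖x − x̄‖ for all x ∈ X. -/

import Mathlib

/-- tilt-invariance characterization of sharp minimizers. -/
theorem tilt_invariance_iff_sharp
    {X : Type*} [NormedAddCommGroup X] [NormedSpace ℝ X]
    (f : X → EReal) (hbot : ∀ x, f x ≠ ⊥) (xbar : X) (hdom : f xbar ≠ ⊤)
    (γ : ℝ) (hγ : 0 < γ) :
    (∀ ξ : X →L[ℝ] ℝ, ‖ξ‖ < γ →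
        {y : X | ∀ z : X, f y - ((ξ y : ℝ) : EReal) ≤ f z - ((ξ z : ℝ) : EReal)} = {xbar})
      ↔ (∀ x : X, f xbar + ((γ * ‖x - xbar‖ : ℝ) : EReal) ≤ f x) := by
  set A : ℝ := (f xbar).toReal with hAdef
  have hA : f xbar = (A : EReal) := (EReal.coe_toReal hdom (hbot xbar)).symm
  constructor
  · intro H
    -- from ξ = 0: xbar is a global minimizer of f
    have h0 := H 0 (by simpa using hγ)
    have hxmem : xbar ∈ ({xbar} : Set X) := rfl
    rw [← h0] at hxmem
    have hmin : ∀ z, f xbar ≤ f z := by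
      intro z
      have := hxmem z
      simpa using this
    intro x
    by_contra hcon
    push_neg at hcon
    have hxne : x ≠ xbar := by
      rintro rfl
      simp at hcon
    have hn : 0 < ‖x - xbar‖ := norm_pos_iff.mpr (sub_ne_zero.mpr hxne)
    have hfx_top : f x ≠ ⊤ := by
      intro h
      rw [h] at hcon
      exact not_top_lt hcon
    set B : ℝ := (f x).toReal with hBdef
    have hB : f x = (B : EReal) := (EReal.coe_toReal hfx_top (hbot x)).symm
    have hAB : A ≤ B := by
      have := hmin x
      rw [hA, hB] at this
      exact_mod_cast this
    have hBlt : B < A + γ * ‖x - xbar‖ := by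
      rw [hA, hB, ← EReal.coe_add] at hcon
      exact_mod_cast hcon
    set n : ℝ := ‖x - xbar‖ with hndef
    set t : ℝ := (B - A) / n with htdef
    have ht : t < γ := (div_lt_iff₀ hn).mpr (by linarith)
    have ht0 : 0 ≤ t := div_nonneg (by linarith) hn.le
    set γ' : ℝ := (t + γ) / 2 with hγ'def
    have h1 : t < γ' := by rw [hγ'def]; linarith
    have h2 : γ' < γ := by rw [hγ'def]; linarith
    have h3 : 0 < γ' := by rw [hγ'def]; linarith
    obtain ⟨g, hg1, hgx⟩ := exists_dual_vector ℝ (x - xbar) hn.ne'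
    have hgx' : g (x - xbar) = n := by exact_mod_cast hgx
    set ξ : X →L[ℝ] ℝ := γ' • g with hξdef
    have hξnorm : ‖ξ‖ < γ := by
      rw [hξdef, norm_smul γ' g, hg1, Real.norm_eq_abs, abs_of_pos h3, mul_one]
      exact h2
    have hmem : xbar ∈ {y : X | ∀ z : X,
        f y - ((ξ y : ℝ) : EReal) ≤ f z - ((ξ z : ℝ) : EReal)} := by
      rw [H ξ hξnorm]; rfl
    have hineq := hmem x
    rw [hA, hB, ← EReal.coe_sub, ← EReal.coe_sub] at hineq
    have hreal : A - ξ xbar ≤ B - ξ x := by exact_mod_cast hineq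
    have hξdiff : ξ x - ξ xbar = γ' * n := by
      have : ξ (x - xbar) = γ' * n := by
        rw [hξdef]
        simp [hgx']
      rw [← this, map_sub]
    have htn : B - A = t * n := by
      rw [htdef]
      field_simp
    have hlt := mul_lt_mul_of_pos_right h1 hn
    linarith
  · intro h ξ hξ
    ext y
    simp only [Set.mem_setOf_eq, Set.mem_singleton_iff]
    constructor
    · intro hy
      by_contra hne
      have hn : 0 < ‖y - xbar‖ := norm_pos_iff.mpr (sub_ne_zero.mpr hne)
      have hgrow := h y
      have hle := hy xbar
      have hfy_top : f y ≠ ⊤ := by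
        intro htop
        rw [htop, hA, EReal.top_sub_coe, ← EReal.coe_sub] at hle
        exact (EReal.coe_lt_top _).not_ge hle
      set B : ℝ := (f y).toReal with hBdef
      have hB : f y = (B : EReal) := (EReal.coe_toReal hfy_top (hbot y)).symm
      have hr1 : B - ξ y ≤ A - ξ xbar := by
        rw [hA, hB, ← EReal.coe_sub, ← EReal.coe_sub] at hle
        exact_mod_cast hle
      have hr2 : A + γ * ‖y - xbar‖ ≤ B := by
        rw [hA, hB, ← EReal.coe_add] at hgrow
        exact_mod_cast hgrow
      have hop : ξ (y - xbar) ≤ ‖ξ‖ * ‖y - xbar‖ :=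
        le_trans (le_abs_self _) (ξ.le_opNorm _)
      rw [map_sub] at hop
      have hlt := mul_lt_mul_of_pos_right hξ hn
      linarith
    · intro he
      intro z
      rw [he]
      by_cases hz : f z = ⊤
      · rw [hz, EReal.top_sub_coe]
        exact le_top
      · have hgrow := h z
        set C : ℝ := (f z).toReal with hCdef
        have hC : f z = (C : EReal) := (EReal.coe_toReal hz (hbot z)).symm
        have hr2 : A + γ * ‖z - xbar‖ ≤ C := by
          rw [hA, hC, ← EReal.coe_add] at hgrow
          exact_mod_cast hgrow
        have hop : ξ (z - xbar) ≤ ‖ξ‖ * ‖z - xbar‖ :=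
          le_trans (le_abs_self _) (ξ.le_opNorm _)
        rw [map_sub] at hop
        have hξn : ‖ξ‖ * ‖z - xbar‖ ≤ γ * ‖z - xbar‖ :=
          mul_le_mul_of_nonneg_right hξ.le (norm_nonneg _)
        rw [hA, hC, ← EReal.coe_sub, ← EReal.coe_sub]
        exact_mod_cast (by linarith : A - ξ xbar ≤ C - ξ z)
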